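/- arXiv:2012.13544 — 4 statements merged into one kernel-verified Lean document; each statement's English description precedes it below -/
import Mathlib

section
/- Let T > 0, n ≥ 1, p ∈ [1, ∞], M₀ ≥ 0 and M₁ > 0. Let z : ℝ → ℝⁿ be a T-periodic function (z(t+T) = z(t) for all t) which is absolutely continuous on [0,T], in the sense that there is an integrable function z' on [0,T] with z(t) = z(0) + ∫₀ᵗ z'(s) ds for all t ∈ [0,T]. Assume: (a) for every ω ∈ ℝⁿ with ‖ω‖ = 1 there exists t₀ ∈ [0,T] such that |⟨z(t₀), ω⟩| ≤ M₀; (b) ‖z'‖_{L^p(0,T)} ≤ M₁. Then for every t ∈ ℝ one has ‖z(t)‖ ≤ M₀ + T^{(p−1)/p} M₁ (with the convention T^{(p−1)/p} = T when p = ∞). -/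
open Set MeasureTheory
open scoped RealInnerProductSpace ENNReal

/-- Lemma 2.1: a priori bound for periodic absolutely continuous functions. -/
theorem stmt_0 {n : ℕ} (hn : 1 ≤ n) (T : ℝ) (hT : 0 < T)
    (p : ℝ≥0∞) (hp : 1 ≤ p) (M₀ M₁ : ℝ) (hM₀ : 0 ≤ M₀) (hM₁ : 0 < M₁)
    (z z' : ℝ → EuclideanSpace ℝ (Fin n))
    (hper : ∀ t, z (t + T) = z t)
    (hint : IntegrableOn z' (Icc 0 T))
    (hAC : ∀ t ∈ Icc (0:ℝ) T, z t = z 0 + ∫ s in (0:ℝ)..t, z' s)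
    (ha : ∀ ω : EuclideanSpace ℝ (Fin n), ‖ω‖ = 1 →
      ∃ t₀ ∈ Icc (0:ℝ) T, |⟪z t₀, ω⟫| ≤ M₀)
    (hb : eLpNorm z' p (volume.restrict (Icc 0 T)) ≤ ENNReal.ofReal M₁) :
    ∀ t : ℝ, ‖z t‖ ≤ M₀ + T ^ (1 - 1 / p.toReal) * M₁ := by
  -- exponent nonneg
  have hexp : 0 ≤ 1 - 1 / p.toReal := by
    rcases eq_or_ne p ∞ with h | h
    · simp [h]
    · have h1 : 1 ≤ p.toReal := by
        have := ENNReal.toReal_mono h hp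
        simpa using this
      have : 1 / p.toReal ≤ 1 := by
        rw [div_le_one (by linarith)]; linarith
      linarith
  have hTpow : (0:ℝ) ≤ T ^ (1 - 1 / p.toReal) := Real.rpow_nonneg hT.le _
  -- L¹ bound on [0,T]
  have hL1 : ∫ s in Icc (0:ℝ) T, ‖z' s‖ ≤ T ^ (1 - 1 / p.toReal) * M₁ := by
    set μ := volume.restrict (Icc (0:ℝ) T)
    have hmeas : z' =ᵐ[μ] z' := Filter.EventuallyEq.refl _ _
    have h1 : eLpNorm z' 1 μ ≤ eLpNorm z' p μ * μ Set.univ ^ (1 / (1:ℝ≥0∞).toReal - 1 / p.toReal) :=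
      eLpNorm_le_eLpNorm_mul_rpow_measure_univ hp hint.1
    have hμuniv : μ Set.univ = ENNReal.ofReal T := by
      simp [μ, Measure.restrict_apply, Real.volume_Icc]
    have h2 : eLpNorm z' 1 μ ≤ ENNReal.ofReal M₁ * ENNReal.ofReal (T ^ (1 - 1 / p.toReal)) := by
      calc eLpNorm z' 1 μ ≤ eLpNorm z' p μ * μ Set.univ ^ (1 / (1:ℝ≥0∞).toReal - 1 / p.toReal) := h1
        _ ≤ ENNReal.ofReal M₁ * ENNReal.ofReal (T ^ (1 - 1 / p.toReal)) := by
            apply mul_le_mul' hb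
            rw [hμuniv]
            simp only [ENNReal.toReal_one, one_div_one]
            rw [← ENNReal.ofReal_rpow_of_pos hT]
        _ = _ := rfl
    have h3 : ∫ s in Icc (0:ℝ) T, ‖z' s‖ = (eLpNorm z' 1 μ).toReal := by
      rw [eLpNorm_one_eq_lintegral_enorm]
      exact integral_norm_eq_lintegral_enorm hint.1
    rw [h3]
    calc (eLpNorm z' 1 μ).toReal
        ≤ (ENNReal.ofReal M₁ * ENNReal.ofReal (T ^ (1 - 1 / p.toReal))).toReal := by
          apply ENNReal.toReal_mono _ h2
          exact ENNReal.mul_ne_top ENNReal.ofReal_ne_top ENNReal.ofReal_ne_top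
      _ = T ^ (1 - 1 / p.toReal) * M₁ := by
          rw [ENNReal.toReal_mul, ENNReal.toReal_ofReal hM₁.le, ENNReal.toReal_ofReal hTpow]
          ring
  -- main claim for t ∈ Icc 0 T
  have key : ∀ t ∈ Icc (0:ℝ) T, ‖z t‖ ≤ M₀ + T ^ (1 - 1 / p.toReal) * M₁ := by
    intro t ht
    rcases eq_or_ne (z t) 0 with h0 | h0
    · rw [h0, norm_zero]
      positivity
    · set ω : EuclideanSpace ℝ (Fin n) := ‖z t‖⁻¹ • z t with hω
      have hωnorm : ‖ω‖ = 1 := norm_smul_inv_norm h0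
      obtain ⟨t₀, ht₀, hbound⟩ := ha ω hωnorm
      have hzt : ‖z t‖ = ⟪z t, ω⟫ := by
        rw [hω, real_inner_smul_right, real_inner_self_eq_norm_sq]
        field_simp [norm_ne_zero_iff.mpr h0]
      have hdiff : z t - z t₀ = ∫ s in t₀..t, z' s := by
        have ii : ∀ a ∈ Icc (0:ℝ) T, IntervalIntegrable z' volume 0 a := by
          intro a ha'
          apply (hint.mono_set _).intervalIntegrable
          rw [uIcc_of_le ha'.1]
          exact Icc_subset_Icc le_rfl ha'.2
        rw [hAC t ht, hAC t₀ ht₀]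
        rw [add_sub_add_left_eq_sub]
        exact intervalIntegral.integral_interval_sub_left (ii t ht) (ii t₀ ht₀)
      have hnormdiff : ‖z t - z t₀‖ ≤ ∫ s in Icc (0:ℝ) T, ‖z' s‖ := by
        rw [hdiff]
        refine (intervalIntegral.norm_integral_le_integral_norm_uIoc).trans ?_
        apply setIntegral_mono_set hint.norm
        · exact Filter.Eventually.of_forall fun s => norm_nonneg _
        · apply Filter.Eventually.of_forall
          intro s hs
          have := Set.uIoc_subset_uIcc hs
          rw [uIcc_comm] at this
          exact Icc_subset_Icc (le_min ht.1 ht₀.1) (max_le ht.2 ht₀.2)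
            (by rcases le_total t t₀ with h | h <;> simp_all [Set.uIcc_of_le, Set.uIcc_of_ge] <;> exact this)
      calc ‖z t‖ = ⟪z t₀, ω⟫ + ⟪z t - z t₀, ω⟫ := by
            rw [hzt, inner_sub_left]; ring
        _ ≤ |⟪z t₀, ω⟫| + |⟪z t - z t₀, ω⟫| := by
            have := abs_add_le ⟪z t₀, ω⟫ ⟪z t - z t₀, ω⟫
            calc _ ≤ |⟪z t₀, ω⟫ + ⟪z t - z t₀, ω⟫| := le_abs_self _
              _ ≤ _ := abs_add_le _ _
        _ ≤ M₀ + ‖z t - z t₀‖ := by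
            gcongr
            calc |⟪z t - z t₀, ω⟫| ≤ ‖z t - z t₀‖ * ‖ω‖ := abs_real_inner_le_norm _ _
              _ = ‖z t - z t₀‖ := by rw [hωnorm, mul_one]
        _ ≤ M₀ + T ^ (1 - 1 / p.toReal) * M₁ := by linarith
  -- reduce general t via periodicity
  intro t
  have hper' : Function.Periodic z T := hper
  obtain ⟨s, hs, hzs⟩ : ∃ s ∈ Ico (0:ℝ) T, z s = z t := by
    obtain ⟨s, hs, hsz⟩ := hper'.exists_mem_Ico₀ hT t
    exact ⟨s, hs, hsz.symm⟩
  rw [← hzs]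
  exact key s (Ico_subset_Icc_self hs)
end

section
/- (Tietze–Nakajima) Let S ⊆ ℝⁿ be closed, connected and locally convex, i.e. every point x ∈ S has an open neighborhood U such that S ∩ U is convex. Then S is convex. -/
open Set

set_option maxHeartbeats 2000000 in
/-- Core 2D lemma: a closed, locally convex subset of `ℝ × ℝ` containing the
left side and the hypotenuse of the standard triangle contains the whole triangle. -/
theorem tn_core (S : Set (ℝ × ℝ)) (hS : IsClosed S)
    (hloc : ∀ p ∈ S, ∃ U : Set (ℝ × ℝ), IsOpen U ∧ p ∈ U ∧ Convex ℝ (S ∩ U))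
    (hleft : ∀ t ∈ Icc (0:ℝ) 1, ((0:ℝ), t) ∈ S)
    (hhyp : ∀ t ∈ Icc (0:ℝ) 1, (t, 1 - t) ∈ S) :
    ∀ p : ℝ × ℝ, 0 ≤ p.1 → 0 ≤ p.2 → p.1 + p.2 ≤ 1 → p ∈ S := by
  by_contra hcon
  push_neg at hcon
  obtain ⟨p₀, hp₀1, hp₀2, hp₀s, hp₀S⟩ := hcon
  set Δ : Set (ℝ × ℝ) := {p | 0 ≤ p.1 ∧ 0 ≤ p.2 ∧ p.1 + p.2 ≤ 1} with hΔdef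
  set H : Set (ℝ × ℝ) := Δ \ S with hHdef
  have hp₀H : p₀ ∈ H := ⟨⟨hp₀1, hp₀2, hp₀s⟩, hp₀S⟩
  have hHne : H.Nonempty := ⟨p₀, hp₀H⟩
  have hΔclosed : IsClosed Δ := by
    have : Δ = {p : ℝ × ℝ | 0 ≤ p.1} ∩ ({p | 0 ≤ p.2} ∩ {p | p.1 + p.2 ≤ 1}) := by
      ext p; simp [hΔdef, and_assoc]
    rw [this]
    exact (isClosed_le continuous_const continuous_fst).inter
      ((isClosed_le continuous_const continuous_snd).inter
        (isClosed_le (continuous_fst.add continuous_snd) continuous_const))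
  have hΔcomp : IsCompact Δ := by
    rw [Metric.isCompact_iff_isClosed_bounded]
    refine ⟨hΔclosed, (Metric.isBounded_closedBall (x := ((0:ℝ),(0:ℝ))) (r := 1)).subset ?_⟩
    intro p hp
    obtain ⟨h1, h2, h3⟩ := hp
    simp only [Metric.mem_closedBall, Prod.dist_eq, Real.dist_eq, sub_zero]
    rw [abs_of_nonneg h1, abs_of_nonneg h2]
    exact max_le (by linarith) (by linarith)
  have hbdd : BddAbove (Prod.snd '' H) := by
    refine ⟨1, ?_⟩
    rintro y ⟨h, hh, rfl⟩
    have := hh.1.1; have := hh.1.2.2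
    linarith
  set m := sSup (Prod.snd '' H) with hmdef
  have hub : ∀ h ∈ H, h.2 ≤ m := fun h hh => le_csSup hbdd ⟨h, hh, rfl⟩
  have hm1 : m ≤ 1 := by
    refine csSup_le (hHne.image _) ?_
    rintro y ⟨h, hh, rfl⟩
    have := hh.1.1; have := hh.1.2.2
    linarith
  have hm0 : 0 ≤ m := le_trans hp₀2 (hub p₀ hp₀H)
  -- dispose of the apex case m = 1
  rcases eq_or_lt_of_le hm1 with hm1eq | hmlt
  · have hcS : ((0:ℝ), (1:ℝ)) ∈ S := hleft 1 ⟨zero_le_one, le_refl 1⟩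
    obtain ⟨U, hUopen, hcU, hUconv⟩ := hloc _ hcS
    obtain ⟨r, hr, hballU⟩ := Metric.isOpen_iff.1 hUopen _ hcU
    set τ := min (r/2) 1 with hτdef
    have hτ0 : 0 < τ := lt_min (by linarith) one_pos
    have hτ1 : τ ≤ 1 := min_le_right _ _
    have hτr : τ < r := lt_of_le_of_lt (min_le_left _ _) (by linarith)
    have hp₁S : ((0:ℝ), 1 - τ) ∈ S := hleft (1 - τ) ⟨by linarith, by linarith⟩
    have hp₂S : (τ, 1 - τ) ∈ S := hhyp τ ⟨le_of_lt hτ0, hτ1⟩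
    have hp₁U : ((0:ℝ), 1 - τ) ∈ U := by
      apply hballU
      simp only [Metric.mem_ball, Prod.dist_eq, Real.dist_eq, max_lt_iff]
      constructor <;> (rw [abs_sub_lt_iff]; constructor <;> linarith)
    have hp₂U : (τ, 1 - τ) ∈ U := by
      apply hballU
      simp only [Metric.mem_ball, Prod.dist_eq, Real.dist_eq, max_lt_iff]
      constructor <;> (rw [abs_sub_lt_iff]; constructor <;> linarith)
    obtain ⟨y₀, hy₀mem, hy₀gt⟩ := exists_lt_of_lt_csSup (hHne.image Prod.snd)
      (show (1:ℝ) - τ < m by rw [hm1eq]; linarith)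
    obtain ⟨h, hh, rfl⟩ := hy₀mem
    have hhΔ := hh.1
    have hh1 : 0 ≤ h.1 := hhΔ.1
    have hh2 : 0 ≤ h.2 := hhΔ.2.1
    have hhs : h.1 + h.2 ≤ 1 := hhΔ.2.2
    set σ := (1 - h.2)/τ with hσdef
    set β := h.1/τ with hβdef
    have hβ0 : 0 ≤ β := div_nonneg hh1 (le_of_lt hτ0)
    have hβσ : β ≤ σ := by
      rw [hβdef, hσdef]
      gcongr
      linarith
    have hσ1 : σ ≤ 1 := by
      rw [hσdef, div_le_one hτ0]; linarith
    have hσ0 : 0 ≤ σ := le_trans hβ0 hβσ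
    rcases eq_or_lt_of_le hσ0 with hσz | hσpos
    · -- σ = 0 forces h = (0,1) ∈ S, contradiction
      have h2eq : h.2 = 1 := by
        have : (1 - h.2)/τ = 0 := hσz.symm
        have := (div_eq_zero_iff.1 this).resolve_right (ne_of_gt hτ0)
        linarith
      have h1eq : h.1 = 0 := le_antisymm (by linarith) hh1
      have : h ∈ S := by
        have : h = ((0:ℝ), (1:ℝ)) := Prod.ext h1eq h2eq
        rw [this]; exact hcS
      exact hh.2 this
    · set w := (1 - β/σ) • ((0:ℝ), 1 - τ) + (β/σ) • (τ, 1 - τ) with hwdef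
      have hwSU : w ∈ S ∩ U := by
        refine hUconv ⟨hp₁S, hp₁U⟩ ⟨hp₂S, hp₂U⟩ ?_ ?_ (by ring)
        · rw [sub_nonneg, div_le_one hσpos]; exact hβσ
        · exact div_nonneg hβ0 (le_of_lt hσpos)
      have hfin : (1 - σ) • ((0:ℝ), (1:ℝ)) + σ • w ∈ S ∩ U :=
        hUconv ⟨hcS, hcU⟩ hwSU (by linarith) (by linarith) (by ring)
      have heq : (1 - σ) • ((0:ℝ), (1:ℝ)) + σ • w = h := by
        rw [hwdef]
        have hτne : τ ≠ 0 := ne_of_gt hτ0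
        have hσne : σ ≠ 0 := ne_of_gt hσpos
        have hb : β * τ = h.1 := by rw [hβdef]; field_simp
        have hs : σ * τ = 1 - h.2 := by rw [hσdef]; field_simp
        apply Prod.ext
        · simp only [Prod.smul_mk, smul_eq_mul, Prod.mk_add_mk, Prod.fst_add, Prod.smul_fst]
          field_simp
          nlinarith [hb, hs]
        · simp only [Prod.smul_mk, smul_eq_mul, Prod.mk_add_mk, Prod.snd_add, Prod.smul_snd]
          field_simp
          nlinarith [hb, hs]
      rw [heq] at hfin
      exact hh.2 hfin.1
  · -- m < 1
    have hHsub : H ⊆ Δ := diff_subset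
    have hcHsub : closure H ⊆ Δ := closure_minimal hHsub hΔclosed
    have hcHcomp : IsCompact (closure H) :=
      hΔcomp.of_isClosed_subset isClosed_closure hcHsub
    have hcHle : closure H ⊆ {p : ℝ × ℝ | p.2 ≤ m} :=
      closure_minimal (fun h hh => hub h hh) (isClosed_le continuous_snd continuous_const)
    -- every point of the triangle at level m is in S
    have levelS : ∀ x : ℝ, 0 ≤ x → x + m ≤ 1 → (x, m) ∈ S := by
      intro x hx hxm
      by_contra hpS
      obtain ⟨δ, hδ, hball⟩ := Metric.isOpen_iff.1 hS.isOpen_compl (x, m) hpS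
      set δ' := min (δ/2) ((1-m)/2) with hδ'def
      have hδ'0 : 0 < δ' := lt_min (by linarith) (by linarith)
      have hδ'δ : δ' ≤ δ/2 := min_le_left _ _
      have hδ'm : δ' ≤ (1-m)/2 := min_le_right _ _
      set x' := min x (1 - m - δ') with hx'def
      have hx'x : x' ≤ x := min_le_left _ _
      have hx'ge : x - δ' ≤ x' := le_min (by linarith) (by linarith)
      have hx'le : x' ≤ 1 - m - δ' := min_le_right _ _
      have hp'c : (x', m + δ') ∈ Sᶜ := by
        apply hball
        simp only [Metric.mem_ball, Prod.dist_eq, Real.dist_eq, max_lt_iff]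
        constructor <;> (rw [abs_sub_lt_iff]; constructor <;> linarith)
      have hp'H : (x', m + δ') ∈ H := by
        refine ⟨⟨le_min hx (by linarith), ?_, ?_⟩, hp'c⟩
        · show (0:ℝ) ≤ m + δ'
          linarith
        · show x' + (m + δ') ≤ 1
          linarith
      have h9 : m + δ' ≤ m := hub _ hp'H
      linarith
    -- m is positive
    have hmpos : 0 < m := by
      rcases eq_or_lt_of_le hm0 with h0 | h0
      · exfalso
        have hp2 : p₀.2 = m := le_antisymm (hub p₀ hp₀H) (h0 ▸ hp₀2)
        have hp₀m : p₀ ∈ S := by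
          have he : p₀ = (p₀.1, m) := Prod.ext rfl hp2
          rw [he]
          refine levelS p₀.1 hp₀1 ?_
          rw [← hp2]; exact hp₀s
        exact hp₀H.2 hp₀m
      · exact h0
    -- the maximal level of the closure of the hole is m, attained
    obtain ⟨z₁, hz₁cH, hz₁max⟩ :=
      hcHcomp.exists_isMaxOn hHne.closure continuous_snd.continuousOn
    have hz₁2 : z₁.2 = m := by
      refine le_antisymm (hcHle hz₁cH) ?_
      by_contra hlt
      push_neg at hlt
      obtain ⟨y₂, hy₂mem, hy₂gt⟩ := exists_lt_of_lt_csSup (hHne.image Prod.snd) hlt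
      obtain ⟨h, hh, rfl⟩ := hy₂mem
      exact absurd (hz₁max (subset_closure hh)) (not_le.2 hy₂gt)
    set K := closure H ∩ {p : ℝ × ℝ | p.2 = m} with hKdef
    have hKcomp : IsCompact K := hcHcomp.of_isClosed_subset
      (isClosed_closure.inter (isClosed_eq continuous_snd continuous_const))
      inter_subset_left
    obtain ⟨q, hqK, hqmin⟩ :=
      hKcomp.exists_isMinOn ⟨z₁, hz₁cH, hz₁2⟩ continuous_fst.continuousOn
    have hqcH : q ∈ closure H := hqK.1
    have hq2 : q.2 = m := hqK.2
    have hqΔ : q ∈ Δ := hcHsub hqcH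
    have hq10 : 0 ≤ q.1 := hqΔ.1
    have hq1m : q.1 + m ≤ 1 := by
      have h := hqΔ.2.2; rw [hq2] at h; exact h
    have hqS : q ∈ S := by
      have he : q = (q.1, m) := Prod.ext rfl hq2
      rw [he]; exact levelS q.1 hq10 hq1m
    obtain ⟨U, hUopen, hqU, hUconv⟩ := hloc q hqS
    obtain ⟨r, hr, hballU⟩ := Metric.isOpen_iff.1 hUopen q hqU
    -- generic step: given δ, a hole point close to q
    have getHole : ∀ δ : ℝ, 0 < δ → ∃ h ∈ H, |q.1 - h.1| < δ ∧ |q.2 - h.2| < δ ∧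
        0 < m - h.2 ∧ m - h.2 < δ := by
      intro δ hδ
      obtain ⟨h, hhH, hdist⟩ := Metric.mem_closure_iff.1 hqcH δ hδ
      rw [Prod.dist_eq, Real.dist_eq, Real.dist_eq] at hdist
      obtain ⟨hd1, hd2⟩ := max_lt_iff.1 hdist
      have hh2m : h.2 ≤ m := hub h hhH
      have hne : h.2 ≠ m := by
        intro hEq
        have hhs : h.1 + m ≤ 1 := by
          have := hhH.1.2.2; rw [hEq] at this; exact this
        have : h ∈ S := by
          have he : h = (h.1, m) := Prod.ext rfl hEq
          rw [he]; exact levelS h.1 hhH.1.1 hhs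
        exact hhH.2 this
      have hgt : 0 < m - h.2 := by
        rcases lt_or_eq_of_le hh2m with hlt | hEq
        · linarith
        · exact absurd hEq hne
      refine ⟨h, hhH, hd1, hd2, hgt, ?_⟩
      have : |q.2 - h.2| = m - h.2 := by
        rw [hq2, abs_of_pos (by linarith : (0:ℝ) < m - h.2)]
      linarith [hd2, this.symm.le]
    -- the contradiction maker: two points of S ∩ (ball q r) whose midpoint is a hole point
    have mkContra : ∀ u v : ℝ × ℝ, u ∈ S → v ∈ S →
        dist u q < r → dist v q < r → ∀ h ∈ H,
        h = ((1:ℝ)/2) • u + ((1:ℝ)/2) • v → False := by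
      intro u v huS hvS hud hvd h hhH hmid
      have huU : u ∈ U := hballU hud
      have hvU : v ∈ U := hballU hvd
      have : ((1:ℝ)/2) • u + ((1:ℝ)/2) • v ∈ S ∩ U :=
        hUconv ⟨huS, huU⟩ ⟨hvS, hvU⟩ (by norm_num) (by norm_num) (by norm_num)
      rw [← hmid] at this
      exact hhH.2 this.1
    rcases eq_or_lt_of_le hq10 with hx0 | hx0
    · -- Case A : q.1 = 0, use the left edge for the lower point
      set δ := min (min ((1-m)/4) (m/4)) (r/4) with hδdef
      have hδpos : 0 < δ :=
        lt_min (lt_min (by linarith) (by linarith)) (by linarith)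
      obtain ⟨h, hhH, hd1, hd2, hγ0, hγδ⟩ := getHole δ hδpos
      set γ := m - h.2 with hγdef
      have hδa : δ ≤ (1-m)/4 := (min_le_left _ _).trans (min_le_left _ _)
      have hδb : δ ≤ m/4 := (min_le_left _ _).trans (min_le_right _ _)
      have hδr : δ ≤ r/4 := min_le_right _ _
      have hq1z : q.1 = 0 := hx0.symm
      have hd1' : |h.1| < δ := by rw [hq1z, zero_sub, abs_neg] at hd1; exact hd1
      have hh1 : 0 ≤ h.1 := hhH.1.1
      have hh1δ : h.1 < δ := lt_of_abs_lt hd1'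
      have huS : ((2*h.1 : ℝ), m) ∈ S := levelS _ (by linarith) (by linarith)
      have hvS : (((0:ℝ)), m - 2*γ) ∈ S := hleft _ ⟨by linarith, by linarith⟩
      refine mkContra _ _ huS hvS ?_ ?_ h hhH ?_
      · simp only [Prod.dist_eq, Real.dist_eq, max_lt_iff]
        constructor <;> (rw [abs_sub_lt_iff]; constructor <;> linarith)
      · simp only [Prod.dist_eq, Real.dist_eq, max_lt_iff]
        constructor <;> (rw [abs_sub_lt_iff]; constructor <;> linarith)
      · apply Prod.ext
        · simp only [Prod.fst_add, Prod.smul_fst, smul_eq_mul]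
          ring
        · simp only [Prod.snd_add, Prod.smul_snd, smul_eq_mul]
          rw [hγdef]; ring
    rcases eq_or_lt_of_le (show q.1 ≤ 1 - m by linarith) with hx1 | hx1
    · -- Case C : q.1 = 1 - m, use the hypotenuse for the lower point
      set δ := min (min ((1-m)/8) (m/4)) (r/8) with hδdef
      have hδpos : 0 < δ :=
        lt_min (lt_min (by linarith) (by linarith)) (by linarith)
      obtain ⟨h, hhH, hd1, hd2, hγ0, hγδ⟩ := getHole δ hδpos
      set γ := m - h.2 with hγdef
      have hδa : δ ≤ (1-m)/8 := (min_le_left _ _).trans (min_le_left _ _)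
      have hδb : δ ≤ m/4 := (min_le_left _ _).trans (min_le_right _ _)
      have hδr : δ ≤ r/8 := min_le_right _ _
      obtain ⟨hd1a, hd1b⟩ := abs_sub_lt_iff.1 hd1
      have hh1 : 0 ≤ h.1 := hhH.1.1
      have hhs : h.1 + h.2 ≤ 1 := hhH.1.2.2
      have huS : ((2*h.1 - (1 - m + 2*γ) : ℝ), m) ∈ S := by
        refine levelS _ (by linarith) (by rw [hγdef]; linarith)
      have hvS : ((1 - m + 2*γ : ℝ), m - 2*γ) ∈ S := by
        have := hhyp (1 - m + 2*γ) ⟨by linarith, by linarith⟩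
        convert this using 2
        ring
      refine mkContra _ _ huS hvS ?_ ?_ h hhH ?_
      · simp only [Prod.dist_eq, Real.dist_eq, max_lt_iff]
        constructor <;> (rw [abs_sub_lt_iff]; constructor <;> linarith)
      · simp only [Prod.dist_eq, Real.dist_eq, max_lt_iff]
        constructor <;> (rw [abs_sub_lt_iff]; constructor <;> linarith)
      · apply Prod.ext
        · simp only [Prod.fst_add, Prod.smul_fst, smul_eq_mul]
          ring
        · simp only [Prod.snd_add, Prod.smul_snd, smul_eq_mul]
          rw [hγdef]; ring
    · -- Case B : 0 < q.1 < 1 - m, interior case, uses the band argument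
      set ρ := min (min (q.1/2) ((1 - m - q.1)/2)) (r/8) with hρdef
      have hρpos : 0 < ρ :=
        lt_min (lt_min (by linarith) (by linarith)) (by linarith)
      have hρa : ρ ≤ q.1/2 := (min_le_left _ _).trans (min_le_left _ _)
      have hρb : ρ ≤ (1 - m - q.1)/2 := (min_le_left _ _).trans (min_le_right _ _)
      have hρr : ρ ≤ r/8 := min_le_right _ _
      -- band claim: hole points in the strip have level bounded away from m
      have hband : ∃ g > 0, ∀ z ∈ H, q.1 - 2*ρ ≤ z.1 → z.1 ≤ q.1 - ρ/2 → z.2 ≤ m - g := by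
        set W := closure H ∩ {z : ℝ × ℝ | q.1 - 2*ρ ≤ z.1 ∧ z.1 ≤ q.1 - ρ/2} with hWdef
        by_cases hWne : W.Nonempty
        · have hWcomp : IsCompact W := hcHcomp.of_isClosed_subset
            (isClosed_closure.inter ((isClosed_le continuous_const continuous_fst).inter
              (isClosed_le continuous_fst continuous_const))) inter_subset_left
          obtain ⟨w, hwW, hwmax⟩ := hWcomp.exists_isMaxOn hWne continuous_snd.continuousOn
          have hwm : w.2 < m := by
            have hw2 : w.2 ≤ m := hcHle hwW.1
            rcases lt_or_eq_of_le hw2 with hlt | hEq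
            · exact hlt
            · exfalso
              have hwK : w ∈ K := ⟨hwW.1, hEq⟩
              have h5 : q.1 ≤ w.1 := hqmin hwK
              have hw1 : w.1 ≤ q.1 - ρ/2 := hwW.2.2
              linarith
          refine ⟨m - w.2, by linarith, fun z hz h1 h2 => ?_⟩
          have h7 : z.2 ≤ w.2 := hwmax (⟨subset_closure hz, h1, h2⟩ : z ∈ W)
          linarith
        · refine ⟨1, one_pos, fun z hz h1 h2 => absurd ?_ hWne⟩
          exact ⟨z, subset_closure hz, h1, h2⟩
      obtain ⟨g, hg, hbandP⟩ := hband
      set δ := min (min (g/4) (ρ/4)) (min (r/8) (m/4)) with hδdef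
      have hδpos : 0 < δ := by
        rw [hδdef]
        exact lt_min (lt_min (by positivity) (by positivity))
          (lt_min (by positivity) (by positivity))
      have hδg : δ ≤ g/4 := (min_le_left _ _).trans (min_le_left _ _)
      have hδρ : δ ≤ ρ/4 := (min_le_left _ _).trans (min_le_right _ _)
      have hδr : δ ≤ r/8 := (min_le_right _ _).trans (min_le_left _ _)
      have hδm : δ ≤ m/4 := (min_le_right _ _).trans (min_le_right _ _)
      obtain ⟨h, hhH, hd1, hd2, hγ0, hγδ⟩ := getHole δ hδpos
      set γ := m - h.2 with hγdef
      obtain ⟨hd1a, hd1b⟩ := abs_sub_lt_iff.1 hd1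
      have hh1 : 0 ≤ h.1 := hhH.1.1
      have hhs : h.1 + h.2 ≤ 1 := hhH.1.2.2
      have hvS : ((q.1 - ρ : ℝ), m - 2*γ) ∈ S := by
        by_contra hvn
        have hvH : ((q.1 - ρ : ℝ), m - 2*γ) ∈ H := by
          refine ⟨⟨?_, ?_, ?_⟩, hvn⟩
          · show (0:ℝ) ≤ q.1 - ρ
            linarith
          · show (0:ℝ) ≤ m - 2*γ
            linarith
          · show (q.1 - ρ) + (m - 2*γ) ≤ 1
            linarith
        have h8 : m - 2*γ ≤ m - g := hbandP _ hvH
          (show q.1 - 2*ρ ≤ q.1 - ρ by linarith) (show q.1 - ρ ≤ q.1 - ρ/2 by linarith)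
        linarith
      have huS : ((2*h.1 - q.1 + ρ : ℝ), m) ∈ S := by
        refine levelS _ (by linarith) (by linarith)
      refine mkContra _ _ huS hvS ?_ ?_ h hhH ?_
      · simp only [Prod.dist_eq, Real.dist_eq, max_lt_iff]
        constructor <;> (rw [abs_sub_lt_iff]; constructor <;> linarith)
      · simp only [Prod.dist_eq, Real.dist_eq, max_lt_iff]
        constructor <;> (rw [abs_sub_lt_iff]; constructor <;> linarith)
      · apply Prod.ext
        · simp only [Prod.fst_add, Prod.smul_fst, smul_eq_mul]
          ring
        · simp only [Prod.snd_add, Prod.smul_snd, smul_eq_mul]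
          rw [hγdef]; ring

/-- Valentine-type transitivity: if `[a,c] ⊆ S` and `[c,b] ⊆ S` then `[a,b] ⊆ S`. -/
theorem tn_trans {E : Type*} [NormedAddCommGroup E] [NormedSpace ℝ E]
    (S : Set E) (hS : IsClosed S)
    (hloc : ∀ x ∈ S, ∃ U : Set E, IsOpen U ∧ x ∈ U ∧ Convex ℝ (S ∩ U))
    {a b c : E} (hac : segment ℝ a c ⊆ S) (hcb : segment ℝ c b ⊆ S) :
    segment ℝ a b ⊆ S := by
  set ψ : ℝ × ℝ → E := fun p => a + p.1 • (b - a) + p.2 • (c - a) with hψ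
  have hψcont : Continuous ψ := by
    apply Continuous.add
    apply Continuous.add continuous_const
    · exact (continuous_fst).smul continuous_const
    · exact (continuous_snd).smul continuous_const
  have hψaff : ∀ (θ : ℝ) (p q : ℝ × ℝ), θ • p + (1 - θ) • q ∈ univ →
      ψ (θ • p + (1 - θ) • q) = θ • ψ p + (1 - θ) • ψ q := by
    intro θ p q _
    simp only [hψ, Prod.fst_add, Prod.snd_add, Prod.smul_fst, Prod.smul_snd, smul_eq_mul]
    module
  have key := tn_core (ψ ⁻¹' S) (hS.preimage hψcont) ?_ ?_ ?_
  · intro z hz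
    rw [segment_eq_image] at hz
    obtain ⟨θ, hθ, rfl⟩ := hz
    have hk := key (θ, 0) hθ.1 le_rfl (by simpa using hθ.2)
    rw [mem_preimage] at hk
    have : ψ (θ, 0) = (1 - θ) • a + θ • b := by simp only [hψ]; module
    rwa [this] at hk
  · -- local convexity of the preimage
    intro p hp
    obtain ⟨U, hU, hxU, hconv⟩ := hloc (ψ p) hp
    refine ⟨ψ ⁻¹' U, hU.preimage hψcont, hxU, ?_⟩
    intro u hu v hv s t hs ht hst
    have : ψ (s • u + t • v) = s • ψ u + t • ψ v := by
      have := hψaff s u v (mem_univ _)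
      rw [show (1 : ℝ) - s = t by linarith] at this
      exact this
    have hm : s • ψ u + t • ψ v ∈ S ∩ U :=
      hconv ⟨hu.1, hu.2⟩ ⟨hv.1, hv.2⟩ hs ht hst
    exact ⟨by rw [mem_preimage, this]; exact hm.1, by rw [mem_preimage, this]; exact hm.2⟩
  · intro t ht
    have : ψ ((0:ℝ), t) = (1 - t) • a + t • c := by simp only [hψ]; module
    rw [mem_preimage, this]
    exact hac (by rw [segment_eq_image]; exact ⟨t, ht, rfl⟩)
  · intro t ht
    have : ψ (t, 1 - t) = (1 - t) • c + t • b := by simp only [hψ]; module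
    rw [mem_preimage, this]
    exact hcb (by rw [segment_eq_image]; exact ⟨t, ht, rfl⟩)

/-- Tietze--Nakajima theorem: a closed, connected, locally convex subset of a
Euclidean space is convex. -/
theorem stmt_3 {n : ℕ} (S : Set (EuclideanSpace ℝ (Fin n)))
    (hclosed : IsClosed S) (hconn : IsConnected S)
    (hloc : ∀ x ∈ S, ∃ U : Set (EuclideanSpace ℝ (Fin n)),
      IsOpen U ∧ x ∈ U ∧ Convex ℝ (S ∩ U)) :
    Convex ℝ S := by
  rw [convex_iff_segment_subset]
  intro x hx y hy
  -- the set of points reachable from x by a segment in S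
  set F : Set (EuclideanSpace ℝ (Fin n)) := {z | segment ℝ x z ⊆ S} with hF
  have hFclosed : IsClosed F := by
    have : F = ⋂ t ∈ Icc (0:ℝ) 1, (fun z => (1 - t) • x + t • z) ⁻¹' S := by
      ext z
      simp only [hF, mem_setOf_eq, mem_iInter, mem_preimage, segment_eq_image,
        image_subset_iff]
      rfl
    rw [this]
    refine isClosed_biInter fun t _ => IsClosed.preimage ?_ hclosed
    exact continuous_const.add (continuous_id.const_smul t)
  by_cases hyF : y ∈ F
  · exact hyF
  exfalso
  -- choose local convexity neighborhoods for every point of S ∩ F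
  choose W hWopen hWmem hWconv using hloc
  set U₁ : Set (EuclideanSpace ℝ (Fin n)) := ⋃ (z : EuclideanSpace ℝ (Fin n)) (hz : z ∈ S ∩ F), W z hz.1 with hU₁
  have hU₁open : IsOpen U₁ := by
    refine isOpen_iUnion fun z => isOpen_iUnion fun hz => hWopen z hz.1
  have hpre := hconn.isPreconnected
  have hsub : S ⊆ U₁ ∪ Fᶜ := by
    intro z hz
    by_cases hzF : z ∈ F
    · exact Or.inl (mem_iUnion.2 ⟨z, mem_iUnion.2 ⟨⟨hz, hzF⟩, hWmem z hz⟩⟩)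
    · exact Or.inr hzF
  have hne1 : (S ∩ U₁).Nonempty := by
    refine ⟨x, hx, ?_⟩
    have hxF : x ∈ F := by
      intro z hz
      rw [segment_same] at hz
      rwa [hz]
    exact mem_iUnion.2 ⟨x, mem_iUnion.2 ⟨⟨hx, hxF⟩, hWmem x hx⟩⟩
  have hne2 : (S ∩ Fᶜ).Nonempty := ⟨y, hy, hyF⟩
  obtain ⟨z, hzS, hzU₁, hzFc⟩ := hpre U₁ Fᶜ hU₁open hFclosed.isOpen_compl hsub hne1 hne2
  -- z lies in some W y₀ with y₀ ∈ S ∩ F; derive z ∈ F, contradiction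
  rw [hU₁, mem_iUnion] at hzU₁
  obtain ⟨y₀, hm⟩ := hzU₁
  rw [mem_iUnion] at hm
  obtain ⟨⟨hy₀S, hy₀F⟩, hzW⟩ := hm
  apply hzFc
  have hseg : segment ℝ y₀ z ⊆ S := by
    have hconvW := hWconv y₀ hy₀S
    intro w hw
    have : w ∈ S ∩ W y₀ hy₀S :=
      (convex_iff_segment_subset.1 hconvW) ⟨hy₀S, hWmem y₀ hy₀S⟩ ⟨hzS, hzW⟩ hw
    exact this.1
  exact tn_trans S hclosed (fun p hp => ⟨W p hp, hWopen p hp, hWmem p hp, hWconv p hp⟩) hy₀F hseg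
end

section
/- Let φ : ℝ → ℝ be an increasing homeomorphism onto ℝ with φ(0) = 0, and let γ > 0 be such that ∫₁^∞ φ⁻¹(ξ) ξ^{−(1+γ)/γ} dξ < ∞. Define x(t) = ∫₀ᵗ φ⁻¹((1−s)^{−γ}) ds for t ∈ [0,1). Then: (a) x'(t) = φ⁻¹((1−t)^{−γ}) for all t ∈ [0,1), and the map t ↦ φ(x'(t)) = (1−t)^{−γ} is differentiable on (0,1) with (φ(x'))'(t) = γ (φ(x'(t)))^{(1+γ)/γ}; (b) x is bounded on [0,1); (c) x'(t) → +∞ as t → 1⁻. -/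
open Set Filter MeasureTheory
open scoped Topology

/-- Example 2.1: for a scalar increasing homeomorphism `φ` with a power-type growth
condition, the equation `(φ(x'))' = γ (φ(x'))^{(1+γ)/γ}` admits a bounded solution on
`[0,1)` with unbounded derivative. -/
theorem stmt_13 (φ ψ : ℝ → ℝ) (hmono : StrictMono φ) (hcont : Continuous φ)
    (hsurj : Function.Surjective φ) (hφ0 : φ 0 = 0)
    (hψl : Function.LeftInverse ψ φ) (hψr : Function.RightInverse ψ φ)
    (γ : ℝ) (hγ : 0 < γ)
    (hint : MeasureTheory.IntegrableOn
      (fun ξ : ℝ => ψ ξ * ξ ^ (-(1 + γ) / γ)) (Ici (1:ℝ))) :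
    (∀ t ∈ Ico (0:ℝ) 1,
      HasDerivWithinAt (fun τ => ∫ s in (0:ℝ)..τ, ψ ((1 - s) ^ (-γ)))
        (ψ ((1 - t) ^ (-γ))) (Ico (0:ℝ) 1) t) ∧
    (∀ t ∈ Ico (0:ℝ) 1, φ (ψ ((1 - t) ^ (-γ))) = (1 - t) ^ (-γ)) ∧
    (∀ t ∈ Ioo (0:ℝ) 1,
      HasDerivAt (fun s => φ (ψ ((1 - s) ^ (-γ))))
        (γ * (φ (ψ ((1 - t) ^ (-γ)))) ^ ((1 + γ) / γ)) t) ∧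
    (∃ C : ℝ, ∀ t ∈ Ico (0:ℝ) 1, |∫ s in (0:ℝ)..t, ψ ((1 - s) ^ (-γ))| ≤ C) ∧
    Tendsto (fun t => ψ ((1 - t) ^ (-γ))) (𝓝[<] (1:ℝ)) atTop := by
  have hψ0 : ψ 0 = 0 := by conv_lhs => rw [← hφ0, hψl 0]
  have hψmono : StrictMono ψ := fun a b hab => by
    have := hmono.lt_iff_lt (a := ψ a) (b := ψ b)
    rw [hψr a, hψr b] at this
    exact this.mp hab
  -- ψ is continuous
  set e : ℝ ≃o ℝ := StrictMono.orderIsoOfSurjective φ hmono hsurj with he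
  have heψ : ψ = e.symm := by
    funext x
    apply hmono.injective
    rw [hψr x]
    exact (e.apply_symm_apply x).symm
  have hψcont : Continuous ψ := by rw [heψ]; exact (e.symm : ℝ ≃o ℝ).continuous
  -- continuity of integrand
  have hfca : ∀ s : ℝ, s < 1 → ContinuousAt (fun s : ℝ => ψ ((1 - s) ^ (-γ))) s := by
    intro s hs
    have h1s : (0:ℝ) < 1 - s := by linarith
    exact hψcont.continuousAt.comp
      (((Real.continuousAt_rpow_const (1 - s) (-γ) (Or.inl h1s.ne')).comp
        ((continuous_const.sub continuous_id).continuousAt)))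
  have hfc : ContinuousOn (fun s : ℝ => ψ ((1 - s) ^ (-γ))) (Iio 1) :=
    fun s hs => (hfca s hs).continuousWithinAt
  have hfpos : ∀ s : ℝ, s < 1 → 0 < ψ ((1 - s) ^ (-γ)) := by
    intro s hs
    have h1s : (0:ℝ) < 1 - s := by linarith
    have : (0:ℝ) < (1 - s) ^ (-γ) := Real.rpow_pos_of_pos h1s _
    calc (0:ℝ) = ψ 0 := hψ0.symm
      _ < _ := hψmono this
  refine ⟨?_, fun t ht => hψr _, ?_, ?_, ?_⟩
  · -- part (a1)
    intro t ht
    obtain ⟨ht0, ht1⟩ := ht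
    have hF : HasDerivAt (fun τ => ∫ s in (0:ℝ)..τ, ψ ((1 - s) ^ (-γ)))
        (ψ ((1 - t) ^ (-γ))) t := by
      apply intervalIntegral.integral_hasDerivAt_right
      · apply ContinuousOn.intervalIntegrable
        apply hfc.mono
        intro x hx
        have := hx.2
        simp only [mem_Iio]
        rcases le_total 0 t with h | h
        · have : x ≤ max 0 t := hx.2
          simp only [max_eq_right h] at this
          linarith
        · have : x ≤ max 0 t := hx.2
          simp only [max_eq_left h] at this
          linarith
      · exact (ContinuousOn.stronglyMeasurableAtFilter isOpen_Iio hfc) t ht1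
      · exact hfca t ht1
    exact hF.hasDerivWithinAt
  · -- part (a2): differential equation
    intro t ht
    obtain ⟨ht0, ht1⟩ := ht
    have h1t : (0:ℝ) < 1 - t := by linarith
    have h1 : HasDerivAt (fun s : ℝ => (1 - s)) (-1) t := by
      simpa using (hasDerivAt_id t).const_sub 1
    have h2 : HasDerivAt (fun y : ℝ => y ^ (-γ)) (-γ * (1 - t) ^ (-γ - 1)) (1 - t) :=
      Real.hasDerivAt_rpow_const (Or.inl h1t.ne')
    have h3 := h2.comp t h1
    have key : (fun s => φ (ψ ((1 - s) ^ (-γ)))) = fun s : ℝ => (1 - s) ^ (-γ) :=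
      funext fun s => hψr _
    rw [key, hψr]
    refine h3.congr_deriv ?_
    rw [← Real.rpow_mul h1t.le]
    have hexp : -γ * ((1 + γ) / γ) = -γ - 1 := by field_simp; ring
    rw [hexp]
    ring
  · -- part (b): boundedness
    set g : ℝ → ℝ := fun ξ => ψ ξ * ξ ^ (-(1 + γ) / γ) / γ with hgdef
    have hgint : IntegrableOn g (Ici (1:ℝ)) := hint.div_const γ
    refine ⟨∫ ξ in Ici (1:ℝ), g ξ, ?_⟩
    intro t ht
    obtain ⟨ht0, ht1⟩ := ht
    have h1t : (0:ℝ) < 1 - t := by linarith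
    have hicc : ∀ s ∈ uIcc (0:ℝ) t, (0:ℝ) < 1 - s := by
      intro s hs
      rw [uIcc_of_le ht0] at hs
      have := hs.2
      linarith
    have hx_nonneg : 0 ≤ ∫ s in (0:ℝ)..t, ψ ((1 - s) ^ (-γ)) := by
      apply intervalIntegral.integral_nonneg ht0
      intro s hs
      exact (hfpos s (by linarith [hs.2])).le
    rw [abs_of_nonneg hx_nonneg]
    set u : ℝ → ℝ := fun s => (1 - s) ^ (-γ) with hudef
    have hb1 : (1:ℝ) ≤ (1 - t) ^ (-γ) :=
      Real.one_le_rpow_of_pos_of_le_one_of_nonpos h1t (by linarith) (by linarith)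
    have hu : ∀ s ∈ uIcc (0:ℝ) t, HasDerivAt u (γ * (1 - s) ^ (-γ - 1)) s := by
      intro s hs
      have h1s := hicc s hs
      have h2 : HasDerivAt (fun y : ℝ => y ^ (-γ)) (-γ * (1 - s) ^ (-γ - 1)) (1 - s) :=
        Real.hasDerivAt_rpow_const (Or.inl h1s.ne')
      have h1 : HasDerivAt (fun s : ℝ => (1 - s)) (-1) s := by
        simpa using (hasDerivAt_id s).const_sub 1
      have h3 := h2.comp s h1
      refine h3.congr_deriv ?_
      ring
    have hu' : ContinuousOn (fun s : ℝ => γ * (1 - s) ^ (-γ - 1)) (uIcc (0:ℝ) t) := by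
      intro s hs
      have h1s := hicc s hs
      apply ContinuousAt.continuousWithinAt
      exact continuousAt_const.mul ((Real.continuousAt_rpow_const (1 - s) (-γ - 1) (Or.inl h1s.ne')).comp
        ((continuous_const.sub continuous_id).continuousAt))
    have hgc : ContinuousOn g (u '' uIcc (0:ℝ) t) := by
      have : ContinuousOn g (Ioi (0:ℝ)) := by
        intro ξ hξ
        apply ContinuousAt.continuousWithinAt
        apply ContinuousAt.div_const
        exact hψcont.continuousAt.mul
          (Real.continuousAt_rpow_const ξ _ (Or.inl (ne_of_gt hξ)))
      apply this.mono
      rintro _ ⟨s, hs, rfl⟩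
      exact Real.rpow_pos_of_pos (hicc s hs) _
    have hcv := intervalIntegral.integral_comp_smul_deriv' hu hu' hgc
    have hcong : (∫ s in (0:ℝ)..t, ψ ((1 - s) ^ (-γ)))
        = ∫ s in (0:ℝ)..t, (γ * (1 - s) ^ (-γ - 1)) • (g ∘ u) s := by
      apply intervalIntegral.integral_congr
      intro s hs
      have hy := hicc s hs
      set A := ψ ((1 - s) ^ (-γ)) with hA
      have hy0 : (1 - s) ^ (-γ - 1) * (1 - s) ^ (1 + γ) = 1 := by
        rw [← Real.rpow_add hy, show -γ - 1 + (1 + γ) = 0 by ring, Real.rpow_zero]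
      have hpow : ((1 - s) ^ (-γ)) ^ (-(1 + γ) / γ) = (1 - s) ^ (1 + γ) := by
        rw [← Real.rpow_mul hy.le]
        congr 1
        field_simp
      show A = (γ * (1 - s) ^ (-γ - 1)) • (g ((1 - s) ^ (-γ)))
      rw [smul_eq_mul, hgdef]
      simp only [hpow, ← hA]
      field_simp
      linear_combination (-A) * hy0
    have hu0 : u 0 = 1 := by simp [hudef]
    rw [hcong, hcv, hu0]
    show (∫ ξ in (1:ℝ)..(1 - t) ^ (-γ), g ξ) ≤ _
    rw [intervalIntegral.integral_of_le hb1]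
    apply MeasureTheory.setIntegral_mono_set hgint
    · refine (ae_restrict_iff' measurableSet_Ici).2 (ae_of_all _ ?_)
      intro ξ hξ
      show (0:ℝ) ≤ g ξ
      have hξ0 : (0:ℝ) < ξ := lt_of_lt_of_le one_pos hξ
      have hψξ : 0 < ψ ξ := by
        calc (0:ℝ) = ψ 0 := hψ0.symm
          _ < ψ ξ := hψmono hξ0
      have := Real.rpow_pos_of_pos hξ0 (-(1 + γ) / γ)
      positivity
    · exact HasSubset.Subset.eventuallyLE (fun x hx => le_of_lt hx.1)
  · -- part (c): blow-up of derivative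
    have h1 : Tendsto (fun t : ℝ => 1 - t) (𝓝[<] (1:ℝ)) (𝓝[>] (0:ℝ)) := by
      apply tendsto_nhdsWithin_of_tendsto_nhds_of_eventually_within
      · have : Tendsto (fun t : ℝ => 1 - t) (𝓝 (1:ℝ)) (𝓝 (1 - 1)) :=
          (continuous_const.sub continuous_id).tendsto 1
        simp only [sub_self] at this
        exact this.mono_left nhdsWithin_le_nhds
      · filter_upwards [self_mem_nhdsWithin] with t ht
        simp only [mem_Iio] at ht
        simp only [mem_Ioi]
        linarith
    have h2 : Tendsto (fun y : ℝ => y ^ (-γ)) (𝓝[>] (0:ℝ)) atTop := by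
      have : Tendsto (fun y : ℝ => (y ^ γ)⁻¹) (𝓝[>] (0:ℝ)) atTop := by
        apply tendsto_inv_nhdsGT_zero.comp
        apply tendsto_nhdsWithin_of_tendsto_nhds_of_eventually_within
        · have := (Real.continuousAt_rpow_const 0 γ (Or.inr hγ.le)).tendsto
          rw [Real.zero_rpow hγ.ne'] at this
          exact this.mono_left nhdsWithin_le_nhds
        · filter_upwards [self_mem_nhdsWithin] with y hy
          exact Real.rpow_pos_of_pos hy _
      refine this.congr' ?_
      filter_upwards [self_mem_nhdsWithin] with y hy
      rw [Real.rpow_neg (le_of_lt hy), inv_eq_one_div, one_div]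
    have h3 : Tendsto ψ atTop atTop := by
      apply Monotone.tendsto_atTop_atTop hψmono.monotone
      intro b
      exact ⟨φ b, (hψl b).ge⟩
    exact h3.comp (h2.comp h1)
end

section
/- Let φ : ℝⁿ → ℝⁿ be a homeomorphism onto ℝⁿ with φ(0) = 0 such that φ(ξ) = A(ξ)·ξ for all ξ ≠ 0, where A : ℝⁿ∖{0} → (0,∞) is continuous. Then ⟨φ(ξ), ξ⟩ > 0 for every ξ ≠ 0, and for every η > 0 there exists M_η > 0 such that ⟨φ(ξ), ξ⟩ ≥ η‖ξ‖ − M_η for all ξ ∈ ℝⁿ. -/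
open Set
open scoped RealInnerProductSpace

/-- Remark 3.1: a homeomorphism of the form `φ(ξ) = A(ξ)·ξ` with `A` positive and
continuous satisfies the sign and coercivity conditions `(H_φ)`. -/
theorem stmt_15 {n : ℕ}
    (φ : EuclideanSpace ℝ (Fin n) → EuclideanSpace ℝ (Fin n))
    (hφ : IsHomeomorph φ) (hφ0 : φ 0 = 0)
    (A : EuclideanSpace ℝ (Fin n) → ℝ)
    (hA : ∀ ξ, ξ ≠ 0 → φ ξ = A ξ • ξ)
    (hApos : ∀ ξ, ξ ≠ 0 → 0 < A ξ)
    (hAcont : ContinuousOn A {0}ᶜ) :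
    (∀ ξ : EuclideanSpace ℝ (Fin n), ξ ≠ 0 → 0 < ⟪φ ξ, ξ⟫) ∧
    ∀ η : ℝ, 0 < η → ∃ M : ℝ, 0 < M ∧
      ∀ ξ : EuclideanSpace ℝ (Fin n), η * ‖ξ‖ - M ≤ ⟪φ ξ, ξ⟫ := by
  have key : ∀ ξ : EuclideanSpace ℝ (Fin n), ξ ≠ 0 → ⟪φ ξ, ξ⟫ = A ξ * ‖ξ‖ ^ 2 := by
    intro ξ hξ
    rw [hA ξ hξ, real_inner_smul_left, real_inner_self_eq_norm_sq]
  have hnn : ∀ ξ : EuclideanSpace ℝ (Fin n), 0 ≤ ⟪φ ξ, ξ⟫ := by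
    intro ξ
    by_cases hξ : ξ = 0
    · simp [hξ]
    · rw [key ξ hξ]
      exact le_of_lt (mul_pos (hApos ξ hξ) (pow_pos (norm_pos_iff.mpr hξ) 2))
  refine ⟨fun ξ hξ => by
    rw [key ξ hξ]
    exact mul_pos (hApos ξ hξ) (pow_pos (norm_pos_iff.mpr hξ) 2), ?_⟩
  intro η hη
  obtain ⟨h, rfl⟩ := isHomeomorph_iff_exists_homeomorph.mp hφ
  have hK : IsCompact (h.symm '' Metric.closedBall 0 η) :=
    (isCompact_closedBall (0 : EuclideanSpace ℝ (Fin n)) η).image h.symm.continuous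
  obtain ⟨R, hR⟩ := hK.isBounded.subset_closedBall 0
  have hR0 : 0 ≤ R := by
    have h0mem : (0 : EuclideanSpace ℝ (Fin n)) ∈ h.symm '' Metric.closedBall 0 η :=
      ⟨0, Metric.mem_closedBall_self hη.le, h.symm_apply_eq.mpr hφ0.symm⟩
    simpa using hR h0mem
  refine ⟨η * (R + 1) + 1, by nlinarith, fun ξ => ?_⟩
  by_cases hle : ‖ξ‖ ≤ R + 1
  · have : η * ‖ξ‖ ≤ η * (R + 1) := by nlinarith
    linarith [hnn ξ]
  · push_neg at hle
    have hξ0 : ξ ≠ 0 := by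
      intro hc
      rw [hc] at hle
      simp at hle
      linarith
    have hφη : η < ‖h ξ‖ := by
      by_contra hcon
      push_neg at hcon
      have : ξ ∈ h.symm '' Metric.closedBall 0 η :=
        ⟨h ξ, by simpa using hcon, by simp⟩
      have := mem_closedBall_iff_norm.mp (hR this)
      simp at this
      linarith
    have hnorm : ‖h ξ‖ = A ξ * ‖ξ‖ := by
      rw [hA ξ hξ0, norm_smul, Real.norm_eq_abs, abs_of_pos (hApos ξ hξ0)]
    have hξpos : 0 < ‖ξ‖ := norm_pos_iff.mpr hξ0
    rw [key ξ hξ0]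
    have : η * ‖ξ‖ ≤ (A ξ * ‖ξ‖) * ‖ξ‖ := by
      have := hφη.le
      rw [hnorm] at this
      nlinarith
    nlinarith [sq_nonneg ‖ξ‖]
end
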